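/- Let α ∈ (0,1), let c_d ≥ 1 be a constant, let v : (0,∞) → (0,∞) be non-decreasing with v(2r) ≤ c_d·v(r) for all r > 0, let h(r) := r·v(r)^{1/α} with generalized inverse h^{-1}(t) := inf{r > 0 : h(r) ≥ t}, and set q := 1 + γ/α where γ := log(c_d)/log(2). Then the function t ↦ t/h^{-1}(t) is non-decreasing on (0,∞); moreover, for every R > 0 there exists c' > 0 such that t/h^{-1}(t) ≥ t^{1-1/q}/c' for all t ∈ (0, h(R)). -/

import Mathlib

/-- The time-scaling function `h(r) = r * v(r)^(1/α)`. -/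
noncomputable def hfun (α : ℝ) (v : ℝ → ℝ) (r : ℝ) : ℝ := r * v r ^ (1/α)

/-- Generalized inverse `h⁻¹(t) = inf {r > 0 : h(r) ≥ t}`. -/
noncomputable def hinv (α : ℝ) (v : ℝ → ℝ) (t : ℝ) : ℝ :=
  sInf {r : ℝ | 0 < r ∧ t ≤ hfun α v r}

section aux
variable {α cd : ℝ} {v : ℝ → ℝ}

lemma h_pos (hv_pos : ∀ r : ℝ, 0 < r → 0 < v r) {r : ℝ} (hr : 0 < r) :
    0 < hfun α v r :=
  mul_pos hr (Real.rpow_pos_of_pos (hv_pos r hr) _)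

lemma h_mono (hα : 0 < α) (hv_pos : ∀ r : ℝ, 0 < r → 0 < v r)
    (hv_mono : ∀ r s : ℝ, 0 < r → r ≤ s → v r ≤ v s)
    {ρ r : ℝ} (hρ : 0 < ρ) (hle : ρ ≤ r) : hfun α v ρ ≤ hfun α v r := by
  unfold hfun
  have h1 : v ρ ^ (1/α) ≤ v r ^ (1/α) :=
    Real.rpow_le_rpow (hv_pos ρ hρ).le (hv_mono ρ r hρ hle) (by positivity)
  have h0 : 0 ≤ v ρ ^ (1/α) := Real.rpow_nonneg (hv_pos ρ hρ).le _
  exact mul_le_mul hle h1 h0 (hρ.trans_le hle).le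

lemma h_slope (hα : 0 < α) (hv_pos : ∀ r : ℝ, 0 < r → 0 < v r)
    (hv_mono : ∀ r s : ℝ, 0 < r → r ≤ s → v r ≤ v s)
    {ρ r : ℝ} (hρ : 0 < ρ) (hle : ρ ≤ r) :
    hfun α v ρ * r ≤ hfun α v r * ρ := by
  unfold hfun
  have h1 : v ρ ^ (1/α) ≤ v r ^ (1/α) :=
    Real.rpow_le_rpow (hv_pos ρ hρ).le (hv_mono ρ r hρ hle) (by positivity)
  have hr0 : 0 < r := hρ.trans_le hle
  nlinarith [mul_le_mul_of_nonneg_left h1 (mul_pos hρ hr0).le]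

lemma hS_ne (hα : 0 < α) (hv_pos : ∀ r : ℝ, 0 < r → 0 < v r)
    (hv_mono : ∀ r s : ℝ, 0 < r → r ≤ s → v r ≤ v s) (t : ℝ) :
    {r : ℝ | 0 < r ∧ t ≤ hfun α v r}.Nonempty := by
  set e := v 1 ^ (1/α) with he_def
  have he : 0 < e := Real.rpow_pos_of_pos (hv_pos 1 one_pos) _
  refine ⟨max 1 (t/e), lt_of_lt_of_le one_pos (le_max_left _ _), ?_⟩
  set r := max 1 (t/e) with hr_def
  have hr1 : 1 ≤ r := le_max_left _ _
  have h2 : t ≤ r * e := by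
    calc t = (t/e)*e := by field_simp
    _ ≤ r*e := mul_le_mul_of_nonneg_right (le_max_right _ _) he.le
  refine h2.trans ?_
  unfold hfun
  have h3 : e ≤ v r ^ (1/α) :=
    Real.rpow_le_rpow (hv_pos 1 one_pos).le (hv_mono 1 r one_pos hr1) (by positivity)
  calc r * e ≤ r * (v r ^ (1/α)) := mul_le_mul_of_nonneg_left h3 (by linarith)
  _ = r * v r ^ (1/α) := rfl

lemma hS_bdd (t : ℝ) : BddBelow {r : ℝ | 0 < r ∧ t ≤ hfun α v r} :=
  ⟨0, fun r hr => hr.1.le⟩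

lemma hinv_pos (hα : 0 < α) (hv_pos : ∀ r : ℝ, 0 < r → 0 < v r)
    (hv_mono : ∀ r s : ℝ, 0 < r → r ≤ s → v r ≤ v s) {t : ℝ} (ht : 0 < t) :
    0 < hinv α v t := by
  set e := v 1 ^ (1/α) with he_def
  have he : 0 < e := Real.rpow_pos_of_pos (hv_pos 1 one_pos) _
  have hm : 0 < min 1 (t/e) := lt_min one_pos (by positivity)
  refine lt_of_lt_of_le hm (le_csInf (hS_ne hα hv_pos hv_mono t) ?_)
  rintro r ⟨hr0, hrt⟩
  rcases le_or_gt 1 r with h1 | h1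
  · exact (min_le_left _ _).trans h1
  · have h3 : v r ^ (1/α) ≤ e :=
      Real.rpow_le_rpow (hv_pos r hr0).le (hv_mono r 1 hr0 h1.le) (by positivity)
    have h4 : t ≤ r * e := by
      refine hrt.trans ?_
      exact mul_le_mul_of_nonneg_left h3 hr0.le
    have : t/e ≤ r := by rw [div_le_iff₀ he]; linarith
    exact (min_le_right _ _).trans this

lemma le_h_of_hinv_lt (hα : 0 < α) (hv_pos : ∀ r : ℝ, 0 < r → 0 < v r)
    (hv_mono : ∀ r s : ℝ, 0 < r → r ≤ s → v r ≤ v s) {t r : ℝ}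
    (hr : hinv α v t < r) : t ≤ hfun α v r := by
  obtain ⟨r', ⟨hr'0, hr't⟩, hr'lt⟩ :=
    exists_lt_of_csInf_lt (hS_ne hα hv_pos hv_mono t) hr
  exact hr't.trans (h_mono hα hv_pos hv_mono hr'0 hr'lt.le)

lemma h_lt_of_lt_hinv {t r : ℝ} (hr0 : 0 < r) (hr : r < hinv α v t) :
    hfun α v r < t := by
  by_contra hc
  push_neg at hc
  exact absurd (csInf_le (hS_bdd t) ⟨hr0, hc⟩) (not_le.mpr hr)

lemma hinv_mono (hα : 0 < α) (hv_pos : ∀ r : ℝ, 0 < r → 0 < v r)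
    (hv_mono : ∀ r s : ℝ, 0 < r → r ≤ s → v r ≤ v s) {s t : ℝ} (hst : s ≤ t) :
    hinv α v s ≤ hinv α v t := by
  refine csInf_le_csInf (hS_bdd s) (hS_ne hα hv_pos hv_mono t) ?_
  rintro r ⟨hr0, hrt⟩
  exact ⟨hr0, hst.trans hrt⟩

lemma hinv_le {t r : ℝ} (hr0 : 0 < r) (hrt : t ≤ hfun α v r) : hinv α v t ≤ r :=
  csInf_le (hS_bdd t) ⟨hr0, hrt⟩

end aux

section aux2
variable {cd : ℝ} {v : ℝ → ℝ}

lemma v_iter (hcd : 1 ≤ cd) (hv_doub : ∀ r : ℝ, 0 < r → v (2 * r) ≤ cd * v r)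
    (n : ℕ) {r : ℝ} (hr : 0 < r) : v (2^n * r) ≤ cd^n * v r := by
  induction n with
  | zero => simp
  | succ n ih =>
    have h2 : (0:ℝ) < 2^n * r := by positivity
    calc v (2^(n+1) * r) = v (2 * (2^n * r)) := by ring_nf
    _ ≤ cd * v (2^n * r) := hv_doub _ h2
    _ ≤ cd * (cd^n * v r) := by
        have hcd0 : (0:ℝ) ≤ cd := by linarith
        exact mul_le_mul_of_nonneg_left ih hcd0
    _ = cd^(n+1) * v r := by ring

lemma v_scale (hcd : 1 ≤ cd) (hv_pos : ∀ r : ℝ, 0 < r → 0 < v r)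
    (hv_mono : ∀ r s : ℝ, 0 < r → r ≤ s → v r ≤ v s)
    (hv_doub : ∀ r : ℝ, 0 < r → v (2 * r) ≤ cd * v r)
    {ρ r : ℝ} (hρ : 0 < ρ) (hle : ρ ≤ r) :
    v r ≤ cd * (r/ρ) ^ (Real.log cd / Real.log 2) * v ρ := by
  have hcd0 : (0:ℝ) < cd := by linarith
  set γ := Real.log cd / Real.log 2 with hγ_def
  have hγ0 : 0 ≤ γ := div_nonneg (Real.log_nonneg hcd) (Real.log_nonneg one_le_two)
  have h2γ : (2:ℝ) ^ γ = cd := by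
    rw [Real.rpow_def_of_pos two_pos]
    rw [show Real.log 2 * γ = Real.log cd by
      rw [hγ_def]; field_simp [(Real.log_pos one_lt_two).ne']
      , Real.exp_log hcd0]
  set x := r / ρ with hx_def
  have hr0 : 0 < r := hρ.trans_le hle
  have hx0 : 0 < x := by positivity
  have hx1 : 1 ≤ x := (one_le_div hρ).mpr hle
  set n := ⌈Real.logb 2 x⌉₊ with hn_def
  have hxn : x ≤ 2^n := by
    calc x = 2 ^ Real.logb 2 x := (Real.rpow_logb two_pos (by norm_num) hx0).symm
    _ ≤ 2 ^ (n:ℝ) := Real.rpow_le_rpow_of_exponent_le one_le_two (Nat.le_ceil _)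
    _ = 2^n := Real.rpow_natCast 2 n
  have hrx : r ≤ 2^n * ρ := by
    rw [hx_def] at hxn
    calc r = (r/ρ) * ρ := by field_simp
    _ ≤ 2^n * ρ := mul_le_mul_of_nonneg_right hxn hρ.le
  have hv1 : v r ≤ cd^n * v ρ :=
    (hv_mono r (2^n * ρ) hr0 hrx).trans (v_iter hcd hv_doub n hρ)
  have hL0 : 0 ≤ Real.logb 2 x := Real.logb_nonneg one_lt_two hx1
  have hn1 : (n:ℝ) ≤ Real.logb 2 x + 1 := (Nat.ceil_lt_add_one hL0).le
  have hcdn : (cd:ℝ)^n ≤ cd * x ^ γ := by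
    calc (cd:ℝ)^n = (2:ℝ) ^ (γ * n) := by
          rw [← h2γ, ← Real.rpow_natCast ((2:ℝ)^γ) n, ← Real.rpow_mul (by norm_num : (0:ℝ) ≤ 2)]
    _ ≤ 2 ^ (γ * (Real.logb 2 x + 1)) :=
          Real.rpow_le_rpow_of_exponent_le one_le_two (by nlinarith)
    _ = cd * x ^ γ := by
          rw [mul_add, mul_one, Real.rpow_add two_pos, h2γ, mul_comm γ (Real.logb 2 x),
            Real.rpow_mul (by norm_num : (0:ℝ) ≤ 2), Real.rpow_logb two_pos (by norm_num) hx0,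
            mul_comm]
  calc v r ≤ cd^n * v ρ := hv1
  _ ≤ (cd * x ^ γ) * v ρ := mul_le_mul_of_nonneg_right hcdn (hv_pos ρ hρ).le
  _ = cd * (r/ρ) ^ γ * v ρ := by rw [hx_def]

lemma h_scale {α : ℝ} (hα : 0 < α) (hcd : 1 ≤ cd)
    (hv_pos : ∀ r : ℝ, 0 < r → 0 < v r)
    (hv_mono : ∀ r s : ℝ, 0 < r → r ≤ s → v r ≤ v s)
    (hv_doub : ∀ r : ℝ, 0 < r → v (2 * r) ≤ cd * v r)
    {ρ r : ℝ} (hρ : 0 < ρ) (hle : ρ ≤ r) :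
    hfun α v r ≤ cd ^ (1/α) * (r/ρ) ^ (1 + (Real.log cd / Real.log 2) / α) * hfun α v ρ := by
  have hcd0 : (0:ℝ) < cd := by linarith
  set γ := Real.log cd / Real.log 2 with hγ_def
  have hγ0 : 0 ≤ γ := div_nonneg (Real.log_nonneg hcd) (Real.log_nonneg one_le_two)
  set x := r / ρ with hx_def
  have hr0 : 0 < r := hρ.trans_le hle
  have hx0 : 0 < x := by positivity
  have hvρ : 0 < v ρ := hv_pos ρ hρ
  have h1 : v r ≤ cd * x ^ γ * v ρ := v_scale hcd hv_pos hv_mono hv_doub hρ hle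
  have h2 : v r ^ (1/α) ≤ (cd * x ^ γ * v ρ) ^ (1/α) :=
    Real.rpow_le_rpow (hv_pos r hr0).le h1 (by positivity)
  have h3 : (cd * x ^ γ * v ρ) ^ (1/α) = cd ^ (1/α) * x ^ (γ/α) * v ρ ^ (1/α) := by
    rw [Real.mul_rpow (by positivity) hvρ.le, Real.mul_rpow hcd0.le (by positivity),
      ← Real.rpow_mul hx0.le, mul_one_div]
  have hxρ : x * ρ = r := div_mul_cancel₀ r hρ.ne'
  have hxq : x ^ (1 + γ/α) * ρ = x ^ (γ/α) * r := by
    rw [Real.rpow_add hx0, Real.rpow_one, ← hxρ]; ring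
  calc hfun α v r = r * v r ^ (1/α) := rfl
  _ ≤ r * (cd ^ (1/α) * x ^ (γ/α) * v ρ ^ (1/α)) :=
      mul_le_mul_of_nonneg_left (h2.trans_eq h3) hr0.le
  _ = cd ^ (1/α) * (x ^ (γ/α) * r) * v ρ ^ (1/α) := by ring
  _ = cd ^ (1/α) * (x ^ (1 + γ/α) * ρ) * v ρ ^ (1/α) := by rw [hxq]
  _ = cd ^ (1/α) * x ^ (1 + γ/α) * hfun α v ρ := by unfold hfun; ring
end aux2

set_option maxHeartbeats 1000000 in
/-- Lemma 4.4(4), first part: `t ↦ t / h⁻¹(t)` is non-decreasing on `(0,∞)`,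
and for every `R > 0` there is `c' > 0` with
`t / h⁻¹(t) ≥ t^(1-1/q) / c'` for `t ∈ (0, h(R))`, where `q = 1 + γ/α`. -/
theorem stmt_4 (α cd : ℝ) (hα : α ∈ Set.Ioo (0:ℝ) 1) (hcd : 1 ≤ cd)
    (v : ℝ → ℝ) (hv_pos : ∀ r : ℝ, 0 < r → 0 < v r)
    (hv_mono : ∀ r s : ℝ, 0 < r → r ≤ s → v r ≤ v s)
    (hv_doub : ∀ r : ℝ, 0 < r → v (2 * r) ≤ cd * v r) :
    MonotoneOn (fun t : ℝ => t / hinv α v t) (Set.Ioi (0:ℝ)) ∧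
    (∀ R : ℝ, 0 < R → ∃ c : ℝ, 0 < c ∧
      ∀ t ∈ Set.Ioo (0:ℝ) (hfun α v R),
        t ^ (1 - 1 / (1 + (Real.log cd / Real.log 2) / α)) / c ≤ t / hinv α v t) := by
  obtain ⟨hα0, hα1⟩ := hα
  have hcd0 : (0:ℝ) < cd := by linarith
  constructor
  · -- monotonicity
    intro s hs t ht hst
    simp only [Set.mem_Ioi] at hs ht
    simp only
    set a := hinv α v s with ha_def
    set b := hinv α v t with hb_def
    have ha : 0 < a := hinv_pos hα0 hv_pos hv_mono hs
    have hb : 0 < b := hinv_pos hα0 hv_pos hv_mono ht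
    have hab : a ≤ b := hinv_mono hα0 hv_pos hv_mono hst
    rw [div_le_div_iff₀ ha hb]
    by_contra hcon
    push_neg at hcon
    have hab' : a < b := by nlinarith
    have hts : t * a / s < b := by rw [div_lt_iff₀ hs]; nlinarith
    set r := (max a (t*a/s) + b)/2 with hr_def
    have hmax : max a (t*a/s) < b := max_lt hab' hts
    have hr1 : max a (t*a/s) < r := by rw [hr_def]; linarith
    have hr2 : r < b := by rw [hr_def]; linarith
    have hra : a < r := lt_of_le_of_lt (le_max_left _ _) hr1
    have hr0 : 0 < r := ha.trans hra
    have hrs : t*a/s < r := lt_of_le_of_lt (le_max_right _ _) hr1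
    have h5 : t*a < r*s := by rw [div_lt_iff₀ hs] at hrs; linarith [mul_comm r s]
    have hρ1 : a < r*s/t := by rw [lt_div_iff₀ ht]; nlinarith
    set ρ := (a + r*s/t)/2 with hρ_def
    have hρa : a < ρ := by rw [hρ_def]; linarith
    have hρlt : ρ < r*s/t := by rw [hρ_def]; linarith
    have hρr : ρ < r := by
      refine hρlt.trans_le ?_
      rw [div_le_iff₀ ht]; nlinarith
    have hρ0 : 0 < ρ := ha.trans hρa
    have h6 : s ≤ hfun α v ρ := le_h_of_hinv_lt hα0 hv_pos hv_mono hρa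
    have h7 : hfun α v r < t := h_lt_of_lt_hinv hr0 hr2
    have h8 : hfun α v ρ * r ≤ hfun α v r * ρ := h_slope hα0 hv_pos hv_mono hρ0 hρr.le
    have h9 : t * ρ < t * (r*s/t) := mul_lt_mul_of_pos_left hρlt ht
    have h10 : t * (r*s/t) = s*r := by field_simp
    have : s * r < s * r := by
      calc s*r ≤ hfun α v ρ * r := mul_le_mul_of_nonneg_right h6 hr0.le
      _ ≤ hfun α v r * ρ := h8
      _ < t * ρ := mul_lt_mul_of_pos_right h7 hρ0
      _ < s*r := by rw [← h10]; exact h9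
    exact absurd this (lt_irrefl _)
  · -- lower bound
    intro R hR
    set γ := Real.log cd / Real.log 2 with hγ_def
    have hγ0 : 0 ≤ γ := div_nonneg (Real.log_nonneg hcd) (Real.log_nonneg one_le_two)
    set q := 1 + γ / α with hq_def
    have hq1 : 1 ≤ q := by
      have h : 0 ≤ γ / α := by positivity
      rw [hq_def]; linarith
    have hq0 : 0 < q := by linarith
    set A := cd ^ (1/α) with hA_def
    have hA1 : 1 ≤ A := by
      calc (1:ℝ) = 1 ^ (1/α) := (Real.one_rpow _).symm
      _ ≤ cd ^ (1/α) := Real.rpow_le_rpow zero_le_one hcd (by positivity)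
    have hA0 : 0 < A := by linarith
    have hhR : 0 < hfun α v R := h_pos hv_pos hR
    set c := R * (A / hfun α v R) ^ (1/q) with hc_def
    have hc0 : 0 < c := by positivity
    refine ⟨c, hc0, ?_⟩
    rintro t ⟨ht0, htR⟩
    have ht0' : (0:ℝ) ≤ t := ht0.le
    have hct : c * t ^ (1/q) = R * (A * t / hfun α v R) ^ (1/q) := by
      rw [hc_def, mul_assoc, ← Real.mul_rpow (by positivity) ht0']
      congr 2
      field_simp
    have hkey : hinv α v t ≤ c * t ^ (1/q) := by
      set ρ := min R (c * t ^ (1/q)) with hρ_def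
      have hρ0 : 0 < ρ := lt_min hR (by positivity)
      have hρR : ρ ≤ R := min_le_left _ _
      have hth : t ≤ hfun α v ρ := by
        rcases le_or_gt (hfun α v R) (A * t) with hca | hca
        · -- ρ = R
          have h1 : (1:ℝ) ≤ A * t / hfun α v R := (one_le_div hhR).mpr hca
          have h2 : (1:ℝ) ≤ (A * t / hfun α v R) ^ (1/q) := by
            calc (1:ℝ) = 1 ^ (1/q) := (Real.one_rpow _).symm
            _ ≤ _ := Real.rpow_le_rpow zero_le_one h1 (by positivity)
          have h3 : R ≤ c * t ^ (1/q) := by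
            rw [hct]
            nlinarith
          have hρ_eq : ρ = R := min_eq_left h3
          rw [hρ_eq]
          exact htR.le
        · -- ρ = c * t^(1/q) ≤ R
          set y := A * t / hfun α v R with hy_def
          have hy0 : 0 < y := by positivity
          have hy1 : y ≤ 1 := by rw [hy_def, div_le_one hhR]; linarith
          have h2 : (y:ℝ) ^ (1/q) ≤ 1 := Real.rpow_le_one hy0.le hy1 (by positivity)
          have h3 : c * t ^ (1/q) ≤ R := by
            rw [hct]
            nlinarith [mul_le_mul_of_nonneg_left h2 hR.le]
          have hρ_eq : ρ = c * t ^ (1/q) := min_eq_right h3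
          have hρ_eq2 : ρ = R * y ^ (1/q) := by rw [hρ_eq, hct, hy_def]
          have hscale : hfun α v R ≤ A * (R/ρ) ^ q * hfun α v ρ :=
            h_scale hα0 hcd hv_pos hv_mono hv_doub hρ0 hρR
          have hρq : ρ ^ q = R ^ q * y := by
            rw [hρ_eq2, Real.mul_rpow hR.le (by positivity), ← Real.rpow_mul hy0.le,
              one_div_mul_cancel hq0.ne', Real.rpow_one]
          have hRρq : (R/ρ) ^ q = 1 / y := by
            rw [Real.div_rpow hR.le hρ0.le, hρq]
            rw [eq_div_iff (by positivity)]
            field_simp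
          have hAy : A * (1/y) = hfun α v R / t := by
            rw [hy_def]; field_simp
          rw [hRρq, hAy] at hscale
          have hhρ : 0 < hfun α v ρ := h_pos hv_pos hρ0
          rw [div_mul_eq_mul_div, le_div_iff₀ ht0] at hscale
          exact (mul_le_mul_iff_right₀ hhR).mp hscale
      calc hinv α v t ≤ ρ := hinv_le hρ0 hth
      _ ≤ c * t ^ (1/q) := min_le_right _ _
    have hhinv0 : 0 < hinv α v t := hinv_pos hα0 hv_pos hv_mono ht0
    have hA2 : 0 < c * t ^ (1/q) := by positivity
    have hstep : t / (c * t ^ (1/q)) ≤ t / hinv α v t := by gcongr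
    refine le_trans (le_of_eq ?_) hstep
    rw [Real.rpow_sub ht0, Real.rpow_one, div_div, mul_comm]
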